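/- Let S, S̃ be subspaces of ℝ^n. Suppose that for every z ∈ S̃⊥ having at least one positive component, at least one of the following holds: (a) there is no s ∈ S with s ≥ 0 componentwise and {i : s_i > 0} = {i : z_i > 0}; (b) there is no r ∈ S with r_i > 0 for every index i with z_i ≠ 0. Then the pair (S, S̃) is nondegenerate. -/

import Mathlib

open scoped BigOperators

noncomputable section

/-- The generalized exponential map `F_c(x) = ∑ i, c_i exp(w̃^i · x) w^i`. -/
def Fmap {d dt n : ℕ} (W : Matrix (Fin d) (Fin n) ℝ) (Wt : Matrix (Fin dt) (Fin n) ℝ)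
    (c : Fin n → ℝ) (x : Fin dt → ℝ) : Fin d → ℝ :=
  fun i => ∑ j, c j * Real.exp (∑ k, Wt k j * x k) * W i j

/-- The polyhedral cone generated by the columns of `W`. -/
def coneOf {d n : ℕ} (W : Matrix (Fin d) (Fin n) ℝ) : Set (Fin d → ℝ) :=
  {y | ∃ u : Fin n → ℝ, (∀ j, 0 ≤ u j) ∧ y = fun i => ∑ j, u j * W i j}

/-- The componentwise sign vector. -/
def signVec {n : ℕ} (x : Fin n → ℝ) : Fin n → SignType := fun i => SignType.sign (x i)

/-- The set of sign vectors of a set of real vectors. -/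
def signSet {n : ℕ} (T : Set (Fin n → ℝ)) : Set (Fin n → SignType) := signVec '' T

/-- The kernel of (the linear map given by) a matrix, as a set. -/
def kerSet {d n : ℕ} (W : Matrix (Fin d) (Fin n) ℝ) : Set (Fin n → ℝ) :=
  {x | W.mulVec x = 0}

/-- The orthogonal complement (w.r.t. the standard inner product) of a set in `ℝ^n`. -/
def orthSet {n : ℕ} (T : Set (Fin n → ℝ)) : Set (Fin n → ℝ) :=
  {v | ∀ u ∈ T, ∑ i, u i * v i = 0}

/-- The partial order on sign vectors: `τ ≤ ρ` iff for each `i`, `τ i = 0` or `τ i = ρ i`. -/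
def sleq {n : ℕ} (τ ρ : Fin n → SignType) : Prop := ∀ i, τ i = 0 ∨ τ i = ρ i

/-- The nonnegative elements (components in `{0,+}`) of a set of sign vectors. -/
def plusPart {n : ℕ} (T : Set (Fin n → SignType)) : Set (Fin n → SignType) :=
  {τ ∈ T | ∀ i, 0 ≤ τ i}

/-- Condition (ii): every nonzero nonnegative sign vector of `S̃⊥` dominates a nonzero
nonnegative sign vector of `S⊥`. -/
def condII {n : ℕ} (S St : Set (Fin n → ℝ)) : Prop :=
  ∀ τt ∈ plusPart (signSet (orthSet St)), τt ≠ 0 →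
    ∃ τ ∈ plusPart (signSet (orthSet S)), τ ≠ 0 ∧ sleq τ τt

/-- Condition (iii): the pair `(S, S̃)` is nondegenerate. -/
def Nondeg {n : ℕ} (S St : Set (Fin n → ℝ)) : Prop :=
  ∀ z ∈ orthSet St, (∃ i, 0 < z i) →
    (∃ lam : ℝ, 0 < lam ∧
      (fun i => if z i = lam then SignType.pos else 0) ∉ plusPart (signSet S)) ∨
    (∃ τ ∈ plusPart (signSet (orthSet S)), τ ≠ 0 ∧ ∀ i, z i = 0 → τ i = 0)

def eSub {n : ℕ} (S : Submodule ℝ (Fin n → ℝ)) : Submodule ℝ (EuclideanSpace ℝ (Fin n)) :=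
  S.comap (WithLp.linearEquiv 2 ℝ (Fin n → ℝ)).toLinearMap

def orthSub {n : ℕ} (S : Submodule ℝ (Fin n → ℝ)) : Submodule ℝ (Fin n → ℝ) where
  carrier := orthSet (S : Set (Fin n → ℝ))
  zero_mem' := by intro u _; simp
  add_mem' := by
    intro a b ha hb u hu
    have h1 := ha u hu
    have h2 := hb u hu
    have : ∑ i, u i * (a + b) i = (∑ i, u i * a i) + ∑ i, u i * b i := by
      rw [← Finset.sum_add_distrib]; exact Finset.sum_congr rfl fun i _ => by simp [mul_add]
    rw [this, h1, h2, add_zero]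
  smul_mem' := by
    intro c v hv u hu
    have h1 := hv u hu
    have : ∑ i, u i * (c • v) i = c * ∑ i, u i * v i := by
      rw [Finset.mul_sum]; exact Finset.sum_congr rfl fun i _ => by simp [smul_eq_mul]; ring
    rw [this, h1, mul_zero]

lemma inner_euc {n : ℕ} (u x : EuclideanSpace ℝ (Fin n)) :
    (inner ℝ u x : ℝ) = ∑ i, u i * x i := by
  simp [PiLp.inner_apply, RCLike.inner_apply, mul_comm]

lemma orth_eq {n : ℕ} (S : Submodule ℝ (Fin n → ℝ)) : (eSub S)ᗮ = eSub (orthSub S) := by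
  ext x
  rw [Submodule.mem_orthogonal]
  constructor
  · intro hx u hu
    have := hx (WithLp.toLp 2 u) hu
    rw [inner_euc] at this
    exact this
  · intro hx u hu
    rw [inner_euc]
    exact hx u.ofLp hu

lemma stiemke {n : ℕ} (S : Submodule ℝ (Fin n → ℝ)) (J : Set (Fin n)) (hJ : J.Nonempty)
    (hv : ∀ v : Fin n → ℝ, v ∈ orthSet (S : Set (Fin n → ℝ)) → (∀ i, 0 ≤ v i) →
      (∀ i, i ∉ J → v i = 0) → v = 0) :
    ∃ r ∈ S, ∀ j ∈ J, 0 < r j := by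
  classical
  set Sp := orthSub S with hSp
  set K : Set (Fin n → ℝ) := stdSimplex ℝ (Fin n) ∩ {y | ∀ i, i ∉ J → y i = 0} with hK
  have hKconv : Convex ℝ K := (convex_stdSimplex ℝ _).inter (by
    intro x hx y hy a b _ _ _
    intro i hi
    simp only [Set.mem_setOf_eq] at hx hy ⊢
    simp [hx i hi, hy i hi])
  have hKcl : IsClosed {y : Fin n → ℝ | ∀ i, i ∉ J → y i = 0} := by
    have : {y : Fin n → ℝ | ∀ i, i ∉ J → y i = 0} = ⋂ i ∈ {i | i ∉ J}, {y : Fin n → ℝ | y i = 0} := by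
      ext y; simp
    rw [this]
    exact isClosed_biInter fun i _ => isClosed_eq (continuous_apply i) continuous_const
  have hKcomp : IsCompact K := (isCompact_stdSimplex ℝ _).inter_right hKcl
  have hdisj : Disjoint (Sp : Set (Fin n → ℝ)) K := by
    rw [Set.disjoint_left]
    rintro v hvSp ⟨⟨hnn, hsum⟩, hsupp⟩
    have hv0 := hv v hvSp hnn hsupp
    rw [hv0] at hsum
    simp at hsum
  obtain ⟨f, u, w, hfu, huw, hfw⟩ := geometric_hahn_banach_closed_compact
    Sp.convex (Submodule.closed_of_finiteDimensional Sp) hKconv hKcomp hdisj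
  have hu0 : 0 < u := by simpa using hfu 0 (zero_mem Sp)
  have hf0 : ∀ a ∈ Sp, f a = 0 := by
    intro a ha
    by_contra hne
    have h1 : ((u + 1) / f a) * f a < u := by
      have := hfu (((u + 1) / f a) • a) (Sp.smul_mem _ ha)
      simpa [map_smul, smul_eq_mul] using this
    rw [div_mul_cancel₀ _ hne] at h1
    linarith
  set r : Fin n → ℝ := fun i => f (fun j => if i = j then 1 else 0) with hr
  have hfy : ∀ y : Fin n → ℝ, f y = ∑ i, y i * r i := by
    intro y
    conv_lhs => rw [pi_eq_sum_univ y]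
    rw [map_sum]
    exact Finset.sum_congr rfl fun i _ => by rw [map_smul]; simp [hr, smul_eq_mul]
  have hrS : r ∈ S := by
    have : (WithLp.toLp 2 r : EuclideanSpace ℝ (Fin n)) ∈ ((eSub S)ᗮ)ᗮ := by
      rw [Submodule.mem_orthogonal]
      intro a ha
      rw [orth_eq] at ha
      have h0 := hf0 a.ofLp ha
      rw [hfy a] at h0
      rw [inner_euc]
      exact h0
    rw [Submodule.orthogonal_orthogonal] at this
    exact this
  refine ⟨r, hrS, ?_⟩
  intro j hj
  have hjK : (fun i => if i = j then (1:ℝ) else 0) ∈ K := by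
    refine ⟨⟨?_, ?_⟩, ?_⟩
    · intro i; dsimp only; split <;> norm_num
    · simp
    · intro i hi
      have : i ≠ j := fun hij => hi (hij ▸ hj)
      simp [this]
  have hlt := hfw _ hjK
  have heq : f (fun i => if i = j then (1:ℝ) else 0) = r j := by
    rw [hfy]
    simp [ite_mul]
  rw [heq] at hlt
  linarith

/-- a sufficient sign-vector condition (iv) for nondegeneracy of `(S, S̃)`. -/
theorem stmt12 {n : ℕ} (S St : Submodule ℝ (Fin n → ℝ))
    (h : ∀ z ∈ orthSet (St : Set (Fin n → ℝ)), (∃ i, 0 < z i) →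
      (¬∃ s ∈ S, (∀ i, 0 ≤ s i) ∧ {i | 0 < s i} = {i | 0 < z i}) ∨
      (¬∃ r ∈ S, ∀ i, z i ≠ 0 → 0 < r i)) :
    Nondeg (S : Set (Fin n → ℝ)) (St : Set (Fin n → ℝ)) := by
  classical
  intro z hz hpos
  rcases h z hz hpos with ha | hb
  · left
    by_contra hc
    push_neg at hc
    have hx : ∀ lam : ℝ, 0 < lam →
        ∃ x ∈ (S : Set (Fin n → ℝ)), signVec x = (fun i => if z i = lam then SignType.pos else 0) := by
      intro lam hlam
      exact (hc lam hlam).1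
    choose! x hxS hxsign using hx
    set L : Finset ℝ := (Finset.univ.filter (fun i => 0 < z i)).image z with hL
    have hLpos : ∀ lam ∈ L, 0 < lam := by
      intro lam hlam
      simp only [hL, Finset.mem_image, Finset.mem_filter, Finset.mem_univ, true_and] at hlam
      obtain ⟨i, hi, rfl⟩ := hlam
      exact hi
    have hsign : ∀ lam, 0 < lam → ∀ i,
        SignType.sign (x lam i) = if z i = lam then SignType.pos else 0 := by
      intro lam hlam i
      exact congrFun (hxsign lam hlam) i
    have hxnn : ∀ lam, 0 < lam → ∀ i, 0 ≤ x lam i := by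
      intro lam hlam i
      have := hsign lam hlam i
      by_cases hzi : z i = lam
      · rw [if_pos hzi] at this
        have : 0 < x lam i := by
          rw [← sign_eq_one_iff]; exact this
        linarith
      · rw [if_neg hzi] at this
        rw [sign_eq_zero_iff] at this
        linarith
    have hxpos : ∀ lam, 0 < lam → ∀ i, (0 < x lam i ↔ z i = lam) := by
      intro lam hlam i
      have hs := hsign lam hlam i
      constructor
      · intro hp
        by_contra hzi
        rw [if_neg hzi, sign_eq_zero_iff] at hs
        linarith
      · intro hzi
        rw [if_pos hzi] at hs
        rw [← sign_eq_one_iff]; exact hs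
    set s : Fin n → ℝ := ∑ lam ∈ L, x lam with hs
    have hsS : s ∈ S := Submodule.sum_mem S fun lam hlam => hxS lam (hLpos lam hlam)
    have hsapp : ∀ i, s i = ∑ lam ∈ L, x lam i := by
      intro i; rw [hs]; simp
    apply ha
    refine ⟨s, hsS, ?_, ?_⟩
    · intro i
      rw [hsapp]
      exact Finset.sum_nonneg fun lam hlam => hxnn lam (hLpos lam hlam) i
    · ext i
      simp only [Set.mem_setOf_eq]
      constructor
      · intro hsi
        by_contra hzi
        have hall : ∀ lam ∈ L, x lam i = 0 := by
          intro lam hlam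
          have hlp := hLpos lam hlam
          have : z i ≠ lam := fun he => hzi (he ▸ hlp)
          have := hsign lam hlp i
          rw [if_neg ‹z i ≠ lam›, sign_eq_zero_iff] at this
          exact this
        rw [hsapp i, Finset.sum_eq_zero hall] at hsi
        exact lt_irrefl 0 hsi
      · intro hzi
        have hmemL : z i ∈ L := by
          simp only [hL, Finset.mem_image, Finset.mem_filter, Finset.mem_univ, true_and]
          exact ⟨i, hzi, rfl⟩
        rw [hsapp i]
        refine Finset.sum_pos' (fun lam hlam => hxnn lam (hLpos lam hlam) i) ⟨z i, hmemL, ?_⟩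
        exact (hxpos (z i) hzi i).2 rfl
  · right
    by_contra hc
    push_neg at hc
    obtain ⟨i0, hi0⟩ := hpos
    have hJne : ({i | z i ≠ 0} : Set (Fin n)).Nonempty := ⟨i0, ne_of_gt hi0⟩
    obtain ⟨r, hrS, hr⟩ := stiemke S {i | z i ≠ 0} hJne (by
      intro v hvorth hvnn hvsupp
      by_contra hv0
      have hτ : signVec v ∈ plusPart (signSet (orthSet (S : Set (Fin n → ℝ)))) := by
        refine ⟨⟨v, hvorth, rfl⟩, ?_⟩
        intro i
        rcases lt_or_eq_of_le (hvnn i) with hp | he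
        · simp [signVec, sign_pos hp]
        · simp [signVec, ← he]
      have hτne : signVec v ≠ 0 := by
        intro h0
        apply hv0
        funext i
        have := congrFun h0 i
        simpa [signVec, sign_eq_zero_iff] using this
      obtain ⟨i, hzi, hne⟩ := hc _ hτ hτne
      apply hne
      have hvi : v i = 0 := hvsupp i (fun hni => hni hzi)
      simp [signVec, hvi])
    exact hb ⟨r, hrS, fun i hi => hr i hi⟩
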